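/- Under the stated tank setup, the augmented storage function W(t) = H(t) + T(t), where H(t) = ½ ẋ(t)ᵀ M_d(t) ẋ(t) and T(t) = ½ z(t)², satisfies for every time t the identity Ẇ(t) = ẋ(t)ᵀ F_ext(t) − (1 − φ(t)) P_D(t) + (1 − γ(t)) P_M(t). -/

import Mathlib

open Matrix

/-- Under the tank setup, the augmented storage function `W = H + T`
satisfies `Ẇ(t) = ẋ(t)ᵀ F_ext(t) − (1 − φ(t)) P_D(t) + (1 − γ(t)) P_M(t)` for every `t`. -/
theorem augmented_storage_rate {n : ℕ} (hn : 0 < n)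
    (x : ℝ → Fin n → ℝ) (hx : ContDiff ℝ 2 x)
    (Md Dd Md' Dd' : ℝ → Matrix (Fin n) (Fin n) ℝ)
    (hMd' : ∀ i j t, HasDerivAt (fun s => Md s i j) (Md' t i j) t)
    (hDd' : ∀ i j t, HasDerivAt (fun s => Dd s i j) (Dd' t i j) t)
    (hMdpd : ∀ t, (Md t).PosDef) (hDdpd : ∀ t, (Dd t).PosDef)
    (Fext : ℝ → Fin n → ℝ)
    (hFext : ∀ t, Fext t = Md t *ᵥ deriv (deriv x) t + Dd t *ᵥ deriv x t)
    (PD PM : ℝ → ℝ)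
    (hPD : ∀ t, PD t = deriv x t ⬝ᵥ (Dd t *ᵥ deriv x t))
    (hPM : ∀ t, PM t = (1 / 2) * (deriv x t ⬝ᵥ (Md' t *ᵥ deriv x t)))
    (φ γ : ℝ → ℝ)
    (hφ : ∀ t, φ t = 0 ∨ φ t = 1) (hγ : ∀ t, γ t = 0 ∨ γ t = 1)
    (z : ℝ → ℝ) (hz : ∀ t, z t ≠ 0)
    (hzdyn : ∀ t, HasDerivAt z (φ t / z t * PD t - γ t / z t * PM t) t)
    (T H W : ℝ → ℝ)
    (hT : ∀ t, T t = (1 / 2) * z t ^ 2)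
    (hH : ∀ t, H t = (1 / 2) * (deriv x t ⬝ᵥ (Md t *ᵥ deriv x t)))
    (hW : ∀ t, W t = H t + T t) :
    ∀ t, HasDerivAt W
      (deriv x t ⬝ᵥ Fext t - (1 - φ t) * PD t + (1 - γ t) * PM t) t := by
  intro t
  -- derivatives of the velocity components
  have hx2 : ContDiff ℝ ((1 : ℕ) + 1) x := by exact_mod_cast hx
  have hdx : Differentiable ℝ (deriv x) :=
    ((contDiff_succ_iff_deriv.mp hx2).2.2).differentiable (by norm_num)
  have hdd : HasDerivAt (deriv x) (deriv (deriv x) t) t := (hdx t).hasDerivAt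
  have hv : ∀ i, HasDerivAt (fun s => deriv x s i) (deriv (deriv x) t i) t :=
    hasDerivAt_pi.mp hdd
  set v : Fin n → ℝ := deriv x t with hvdef
  set a : Fin n → ℝ := deriv (deriv x) t with hadef
  -- derivative of H
  have hHfun : H = fun s => (1 / 2) * ∑ i, deriv x s i * ∑ j, Md s i j * deriv x s j := by
    funext s
    rw [hH s]
    simp [dotProduct, mulVec]
  have hH' : HasDerivAt H ((1 / 2) * ∑ i,
      (a i * ∑ j, Md t i j * v j +
        v i * ∑ j, (Md' t i j * v j + Md t i j * a j))) t := by
    rw [hHfun]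
    exact (HasDerivAt.fun_sum fun i _ =>
      (hv i).fun_mul (HasDerivAt.fun_sum fun j _ => (hMd' i j t).fun_mul (hv j))).const_mul _
  -- derivative of T
  have hT' : HasDerivAt T (φ t * PD t - γ t * PM t) t := by
    have h1 := ((hzdyn t).fun_pow 2).const_mul (1 / 2 : ℝ)
    have hfun : T = fun s => (1 / 2) * z s ^ 2 := funext hT
    rw [hfun]
    refine h1.congr_deriv ?_
    have hzt := hz t
    field_simp
    norm_num
  have hW' := hH'.fun_add hT'
  have hWfun : W = fun s => H s + T s := funext hW
  rw [hWfun]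
  refine hW'.congr_deriv ?_
  -- algebraic identity between the two derivative values
  have hsym : ∀ i j, Md t i j = Md t j i := by
    intro i j
    have h := congrFun (congrFun (hMdpd t).1 i) j
    simpa [Matrix.conjTranspose, Matrix.transpose] using h.symm
  have hswap : (∑ i, a i * ∑ j, Md t i j * v j) = ∑ i, v i * ∑ j, Md t i j * a j := by
    simp only [Finset.mul_sum]
    rw [Finset.sum_comm]
    refine Finset.sum_congr rfl fun i _ => Finset.sum_congr rfl fun j _ => ?_
    rw [hsym j i]; ring
  have hdist : (∑ i, (a i * ∑ j, Md t i j * v j +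
      v i * ∑ j, (Md' t i j * v j + Md t i j * a j)))
      = (∑ i, a i * ∑ j, Md t i j * v j)
        + ((∑ i, v i * ∑ j, Md' t i j * v j) + (∑ i, v i * ∑ j, Md t i j * a j)) := by
    simp [Finset.sum_add_distrib, mul_add]
  rw [hdist, hswap, hFext t, hPD t, hPM t]
  simp only [dotProduct, mulVec, Pi.add_apply, mul_add, Finset.sum_add_distrib]
  ring
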